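/- arXiv:2205.01047 — 4 statements merged into one kernel-verified Lean document; each statement's English description precedes it below -/
import Mathlib

section
/- For every σ > 0 there exists a real number K₁ = K₁(σ) > 2 with the following property: for all real α ≠ β with |α| ≥ σ, |β| ≥ σ, |α + β| ≥ σ, every K ≥ K₁, every r > 0, and every pair (c, c') ∈ ℝ² with (c, c') ≠ (0, 0), setting I(ρ) := ∫_ρ^{Kρ} (c s^α + c' s^β)² s^{−1} ds, one has I(K²r) − 2·I(Kr) + I(r) > 0. -/
open MeasureTheory intervalIntegral

set_option maxHeartbeats 1000000


lemma hexp_sinh (u : ℝ) : Real.exp u * (2 * Real.sinh u) = Real.exp (2*u) - 1 := by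
  have e1 : Real.exp (2*u) = Real.exp u * Real.exp u := by rw [two_mul, Real.exp_add]
  have e2 : Real.exp u * Real.exp (-u) = 1 := by rw [← Real.exp_add]; simp
  rw [Real.sinh_eq]
  linear_combination (-1:ℝ) * e1 - e2

lemma hcosh_half (x : ℝ) : Real.cosh x = 1 + 2 * Real.sinh (x/2)^2 := by
  have h : Real.cosh (2 * (x/2)) = 1 + 2 * Real.sinh (x/2)^2 := by
    rw [Real.cosh_two_mul]
    have := Real.cosh_sq (x/2)
    linarith
  calc Real.cosh x = Real.cosh (2 * (x/2)) := by congr 1; ring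
    _ = 1 + 2 * Real.sinh (x/2)^2 := h

lemma hsinh_mul (x y : ℝ) : 2 * (Real.sinh x * Real.sinh y) = Real.cosh (x+y) - Real.cosh (x-y) := by
  rw [Real.cosh_add, Real.cosh_sub]; ring

lemma hsinh_le (p : ℝ) (hp : 0 ≤ p) : Real.sinh p ≤ p * Real.cosh p := by
  have hderiv : ∀ x : ℝ, HasDerivAt (fun x => x * Real.cosh x - Real.sinh x) (x * Real.sinh x) x := by
    intro x
    have h := ((hasDerivAt_id x).mul (Real.hasDerivAt_cosh x)).sub (Real.hasDerivAt_sinh x)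
    have h2 : x * Real.sinh x = 1 * Real.cosh x + id x * Real.sinh x - Real.cosh x := by simp only [id]; ring
    rw [h2]
    exact h
  have mono : MonotoneOn (fun x => x * Real.cosh x - Real.sinh x) (Set.Ici 0) := by
    apply monotoneOn_of_deriv_nonneg (convex_Ici 0)
    · exact ((continuous_id.mul Real.continuous_cosh).sub Real.continuous_sinh).continuousOn
    · intro x hx
      exact (hderiv x).differentiableAt.differentiableWithinAt
    · intro x hx
      rw [interior_Ici] at hx
      rw [(hderiv x).deriv]
      have h2 : 0 ≤ Real.sinh x := by
        rw [← Real.sinh_zero]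
        exact Real.sinh_le_sinh.mpr (le_of_lt hx)
      exact mul_nonneg (le_of_lt hx) h2
  have h0 : (0:ℝ) ∈ Set.Ici (0:ℝ) := Set.self_mem_Ici
  have := mono h0 hp hp
  simp at this
  linarith

-- kernel 1 (same sign)
lemma kernel1 (p q : ℝ) (hp : 0 < p) (hq : p + 9 ≤ q) : 2*q*Real.sinh p < p*Real.sinh q := by
  set t := q - p with ht
  have ht9 : 9 ≤ t := by simp [ht]; linarith
  have hq_eq : q = p + t := by ring
  have hsq : Real.sinh q = Real.sinh p * Real.cosh t + Real.cosh p * Real.sinh t := by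
    rw [hq_eq, Real.sinh_add]
  have hsp : 0 < Real.sinh p := Real.sinh_pos_iff.mpr hp
  have hcp : 0 < Real.cosh p := Real.cosh_pos p
  have hct : (1+t)/2 ≤ Real.cosh t := by
    have h1 : 1 + t ≤ Real.exp t := by linarith [Real.add_one_le_exp t]
    have h2 : 0 < Real.exp (-t) := Real.exp_pos _
    rw [Real.cosh_eq]
    linarith
  have hct5 : 5 ≤ Real.cosh t := by linarith
  have hst : 2*t ≤ Real.sinh t := by
    have h1 : 1 + t/3 ≤ Real.exp (t/3) := by linarith [Real.add_one_le_exp (t/3)]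
    have h3 : Real.exp t = Real.exp (t/3) * Real.exp (t/3) * Real.exp (t/3) := by
      rw [← Real.exp_add, ← Real.exp_add]; congr 1; ring
    have h0 : (0:ℝ) ≤ 1 + t/3 := by linarith
    have h4 : (1+t/3)^3 ≤ Real.exp t := by
      calc (1+t/3)^3 ≤ (Real.exp (t/3))^3 := pow_le_pow_left₀ h0 h1 3
        _ = Real.exp t := by rw [h3]; ring
    have h5 : 0 < Real.exp (-t) := Real.exp_pos _
    have h6 : Real.exp (-t) ≤ 1 := by
      calc Real.exp (-t) ≤ Real.exp 0 := Real.exp_le_exp.mpr (by linarith)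
        _ = 1 := Real.exp_zero
    rw [Real.sinh_eq]
    nlinarith
  have hle : Real.sinh p ≤ p * Real.cosh p := hsinh_le p hp.le
  have e2 : 2*t*Real.sinh p ≤ p * Real.cosh p * Real.sinh t := by
    calc 2*t*Real.sinh p ≤ 2*t*(p*Real.cosh p) := by
          apply mul_le_mul_of_nonneg_left hle (by linarith)
      _ = p*Real.cosh p*(2*t) := by ring
      _ ≤ p * Real.cosh p * Real.sinh t := by
          apply mul_le_mul_of_nonneg_left hst (by positivity)
  have e1 : p*Real.sinh p*5 ≤ p*Real.sinh p*Real.cosh t :=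
    mul_le_mul_of_nonneg_left hct5 (by positivity)
  rw [hsq, hq_eq]
  nlinarith [mul_pos hp hsp]

-- kernel 2 (mixed sign)
lemma kernel2 (p q : ℝ) (hp : 9/2 ≤ p) (hq : p + 9 ≤ q) :
    (q^2 - p^2) * Real.sinh p ^ 6 < p^2 * (Real.sinh q ^ 2 - Real.sinh p ^ 2)^3 := by
  set t := q - p with ht
  have ht9 : 9 ≤ t := by simp [ht]; linarith
  have hq_eq : q = p + t := by ring
  have hsp : 0 < Real.sinh p := Real.sinh_pos_iff.mpr (by linarith)
  have hst0 : 0 ≤ Real.sinh t := Real.sinh_nonneg_iff.mpr (by linarith)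
  have hcs : Real.sinh p ≤ Real.cosh p := by
    have := Real.cosh_sub_sinh p
    nlinarith [Real.exp_pos (-p)]
  have hexp : Real.sinh p * Real.exp t ≤ Real.sinh q := by
    have h1 : Real.sinh q = Real.sinh p * Real.cosh t + Real.cosh p * Real.sinh t := by
      rw [hq_eq, Real.sinh_add]
    have h2 : Real.sinh p * Real.sinh t ≤ Real.cosh p * Real.sinh t :=
      mul_le_mul_of_nonneg_right hcs hst0
    have h3 : Real.cosh t + Real.sinh t = Real.exp t := Real.cosh_add_sinh t
    nlinarith
  have hW : 1 + t ≤ Real.exp t := by linarith [Real.add_one_le_exp t]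
  have hWpos : 0 < Real.exp t := Real.exp_pos t
  -- sinh q^2 ≥ sinh p^2 * exp(2t)
  have hsq2 : Real.sinh p ^ 2 * (Real.exp t)^2 ≤ Real.sinh q ^ 2 := by
    have h0 : 0 ≤ Real.sinh p * Real.exp t := by positivity
    nlinarith [hexp]
  have hE1 : t^2 ≤ (Real.exp t)^2 - 1 := by nlinarith
  have hE3 : (t^2)^3 ≤ ((Real.exp t)^2 - 1)^3 := pow_le_pow_left₀ (by positivity) hE1 3
  have hkey : q^2 - p^2 < p^2 * ((Real.exp t)^2 - 1)^3 := by
    have h1 : p^2 * ((Real.exp t)^2-1)^3 ≥ p^2 * t^6 := by nlinarith [hE3, sq_nonneg p]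
    have h2 : q^2 - p^2 = t^2 + 2*p*t := by rw [hq_eq]; ring
    have hp0 : (0:ℝ) < p := by linarith
    have ht0 : (0:ℝ) < t := by linarith
    have ha : (81:ℝ) ≤ t^2 := by nlinarith
    have hb : (6561:ℝ) ≤ t^4 := by nlinarith [ha, sq_nonneg (t^2-81)]
    have hpt : (2:ℝ) ≤ p*t := by nlinarith
    have hd : 2*p*t ≤ p^2*t^2 := by nlinarith [mul_nonneg (mul_pos hp0 ht0).le (show (0:ℝ) ≤ p*t - 2 by linarith)]
    have hp2 : (1:ℝ) ≤ p^2 := by nlinarith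
    have hf : t^2 ≤ p^2*t^2 := by
      calc t^2 = 1*t^2 := by ring
        _ ≤ p^2*t^2 := mul_le_mul_of_nonneg_right hp2 (sq_nonneg t)
    have he : p^2*t^2*6561 ≤ p^2*t^2*t^4 := mul_le_mul_of_nonneg_left hb (by positivity)
    have hg : 0 < p^2*t^2 := by positivity
    have hh : p^2*t^2*t^4 = p^2*t^6 := by ring
    linarith
  -- combine
  have hmid : (Real.sinh p)^2 * ((Real.exp t)^2 - 1) ≤ Real.sinh q^2 - Real.sinh p^2 := by nlinarith
  have hcube : ((Real.sinh p)^2)^3 * ((Real.exp t)^2 - 1)^3 ≤ (Real.sinh q^2 - Real.sinh p^2)^3 := by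
    calc ((Real.sinh p)^2)^3 * ((Real.exp t)^2 - 1)^3 = ((Real.sinh p)^2 * ((Real.exp t)^2 - 1))^3 := by ring
      _ ≤ (Real.sinh q^2 - Real.sinh p^2)^3 := pow_le_pow_left₀ (by nlinarith) hmid 3
  calc (q^2 - p^2) * Real.sinh p ^ 6 < p^2 * ((Real.exp t)^2 - 1)^3 * Real.sinh p ^ 6 := by
        apply mul_lt_mul_of_pos_right hkey (by positivity)
    _ = p^2 * (((Real.sinh p)^2)^3 * ((Real.exp t)^2 - 1)^3) := by ring
    _ ≤ p^2 * (Real.sinh q^2 - Real.sinh p^2)^3 := by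
        apply mul_le_mul_of_nonneg_left hcube (by positivity)

lemma branch_pos (σ L α β : ℝ) (hσ : 0 < σ) (hL9 : 9 ≤ σ*L) (hβσ : σ ≤ β) (hba : β < α) :
    (8*Real.sinh ((α+β)*(L/2))^3/(α+β))^2
      < 8*Real.sinh (α*L)^3/(2*α)*(8*Real.sinh (β*L)^3/(2*β)) := by
  have hL0 : 0 < L := by nlinarith
  have hβ0 : 0 < β := lt_of_lt_of_le hσ hβσ
  have hα0 : 0 < α := lt_trans hβ0 hba
  set q := (α+β)*(L/2) with hqdef
  set p := (α-β)*(L/2) with hpdef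
  have hp0 : 0 < p := by rw [hpdef]; apply mul_pos (by linarith) (by linarith)
  have h9 : 9 ≤ β*L := le_trans hL9 (mul_le_mul_of_nonneg_right hβσ hL0.le)
  have hpq : p + β*L = q := by rw [hpdef, hqdef]; ring
  have hq9 : p + 9 ≤ q := by linarith
  have k := kernel1 p q hp0 hq9
  have hq0 : 0 < q := by linarith
  have hP : 0 < Real.sinh p := Real.sinh_pos_iff.mpr hp0
  have hS : 0 < Real.sinh q := Real.sinh_pos_iff.mpr hq0
  have hPS : Real.sinh p < Real.sinh q := Real.sinh_lt_sinh.mpr (by linarith)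
  have ksq : (2*q*Real.sinh p)^2 < (p*Real.sinh q)^2 :=
    pow_lt_pow_left₀ k (by positivity) two_ne_zero
  have hAB : Real.sinh (α*L) * Real.sinh (β*L) = Real.sinh q^2 - Real.sinh p^2 := by
    have h1 := hsinh_mul (α*L) (β*L)
    have e1 : α*L + β*L = 2*q := by rw [hqdef]; ring
    have e2 : α*L - β*L = 2*p := by rw [hpdef]; ring
    rw [e1, e2, hcosh_half (2*q), hcosh_half (2*p),
      show 2*q/2 = q by ring, show 2*p/2 = p by ring] at h1
    linarith
  set S := Real.sinh q with hSdef
  set P := Real.sinh p with hPdef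
  have key : S^6*(q^2-p^2) < q^2*(S^2-P^2)^3 := by
    have hid : q^2*(S^2-P^2)^3 - (q^2-p^2)*S^6
        = S^4*(p^2*S^2 - 3*q^2*P^2) + q^2*P^4*(3*S^2-P^2) := by ring
    have h1 : 0 < S^4*(p^2*S^2 - 3*q^2*P^2) := by
      apply mul_pos (by positivity)
      nlinarith [ksq, mul_pos (mul_pos hq0 hq0) (mul_pos hP hP)]
    have h2 : 0 ≤ q^2*P^4*(3*S^2-P^2) := by
      apply mul_nonneg (by positivity)
      nlinarith [hPS, hP]
    nlinarith [hid, h1, h2]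
  have eL : (8*S^3/(α+β))^2 = 64*S^6/((α+β)^2) := by
    rw [div_pow]; congr 1; ring
  have eR : 8*Real.sinh (α*L)^3/(2*α)*(8*Real.sinh (β*L)^3/(2*β))
      = 64*(S^2-P^2)^3/(4*(α*β)) := by
    rw [div_mul_div_comm,
      show (8*Real.sinh (α*L)^3)*(8*Real.sinh (β*L)^3)
        = 64*(Real.sinh (α*L)*Real.sinh (β*L))^3 by ring,
      hAB, show (2*α)*(2*β) = 4*(α*β) by ring]
  rw [eL, eR, div_lt_div_iff₀ (by positivity) (by positivity)]
  have F1 : q^2 - p^2 = α*β*L^2 := by rw [hqdef, hpdef]; ring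
  have F2 : 4*q^2 = (α+β)^2*L^2 := by rw [hqdef]; ring
  have hL2 : 0 < L^2 := by positivity
  have final : 64*S^6*(4*(α*β))*L^2 < 64*(S^2-P^2)^3*(α+β)^2*L^2 := by
    calc 64*S^6*(4*(α*β))*L^2 = 256*(S^6*(α*β*L^2)) := by ring
      _ = 256*(S^6*(q^2-p^2)) := by rw [F1]
      _ < 256*(q^2*(S^2-P^2)^3) := by linarith [key]
      _ = 64*(S^2-P^2)^3*(4*q^2) := by ring
      _ = 64*(S^2-P^2)^3*((α+β)^2*L^2) := by rw [F2]
      _ = 64*(S^2-P^2)^3*(α+β)^2*L^2 := by ring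
  exact lt_of_mul_lt_mul_right final (le_of_lt hL2)


lemma branch_mixed (σ L α β : ℝ) (hσ : 0 < σ) (hL9 : 9 ≤ σ*L) (hα : σ ≤ α) (hβ : σ ≤ -β)
    (hab : σ ≤ α+β) :
    (8*Real.sinh ((α+β)*(L/2))^3/(α+β))^2
      < 8*Real.sinh (α*L)^3/(2*α)*(8*Real.sinh (β*L)^3/(2*β)) := by
  have hL0 : 0 < L := by nlinarith
  have hα0 : 0 < α := lt_of_lt_of_le hσ hα
  have hβ0 : β < 0 := by linarith
  set p := (α+β)*(L/2) with hpdef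
  set q := (α-β)*(L/2) with hqdef
  have hab0 : 0 < α+β := lt_of_lt_of_le hσ hab
  have hσL2 : 9/2 ≤ σ*L/2 := by linarith
  have hp92 : 9/2 ≤ p := by
    rw [hpdef]
    calc (9:ℝ)/2 ≤ σ*L/2 := hσL2
      _ ≤ (α+β)*(L/2) := by rw [show σ*L/2 = σ*(L/2) by ring]; exact mul_le_mul_of_nonneg_right hab (by linarith)
  have h9 : 9 ≤ (-β)*L := le_trans hL9 (mul_le_mul_of_nonneg_right hβ hL0.le)
  have hpq : p + (-β)*L = q := by rw [hpdef, hqdef]; ring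
  have hq9 : p + 9 ≤ q := by linarith
  have k := kernel2 p q hp92 hq9
  have hp0 : (0:ℝ) < p := by linarith
  have hq0 : 0 < q := by linarith
  have hP : 0 < Real.sinh p := Real.sinh_pos_iff.mpr hp0
  have hS : 0 < Real.sinh q := Real.sinh_pos_iff.mpr hq0
  have hPS : Real.sinh p < Real.sinh q := Real.sinh_lt_sinh.mpr (by linarith)
  have hAB : Real.sinh (α*L) * Real.sinh (β*L) = Real.sinh p^2 - Real.sinh q^2 := by
    have h1 := hsinh_mul (α*L) (β*L)
    have e1 : α*L + β*L = 2*p := by rw [hpdef]; ring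
    have e2 : α*L - β*L = 2*q := by rw [hqdef]; ring
    rw [e1, e2, hcosh_half (2*p), hcosh_half (2*q),
      show 2*q/2 = q by ring, show 2*p/2 = p by ring] at h1
    linarith
  set S := Real.sinh q with hSdef
  set P := Real.sinh p with hPdef
  have hnαβ : 0 < -(α*β) := by nlinarith
  have eL : (8*P^3/(α+β))^2 = 64*P^6/((α+β)^2) := by
    rw [div_pow]; congr 1; ring
  have eR : 8*Real.sinh (α*L)^3/(2*α)*(8*Real.sinh (β*L)^3/(2*β))
      = 64*(S^2-P^2)^3/(4*(-(α*β))) := by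
    rw [div_mul_div_comm,
      show (8*Real.sinh (α*L)^3)*(8*Real.sinh (β*L)^3)
        = 64*(Real.sinh (α*L)*Real.sinh (β*L))^3 by ring,
      hAB,
      show 64*(P^2-S^2)^3 = -(64*(S^2-P^2)^3) by ring,
      show (2*α)*(2*β) = -(4*(-(α*β))) by ring,
      neg_div_neg_eq]
  rw [eL, eR, div_lt_div_iff₀ (by positivity) (by positivity)]
  have F1 : q^2 - p^2 = -(α*β)*L^2 := by rw [hqdef, hpdef]; ring
  have F2 : 4*p^2 = (α+β)^2*L^2 := by rw [hpdef]; ring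
  have hL2 : 0 < L^2 := by positivity
  have final : 64*P^6*(4*(-(α*β)))*L^2 < 64*(S^2-P^2)^3*(α+β)^2*L^2 := by
    calc 64*P^6*(4*(-(α*β)))*L^2 = 256*((-(α*β)*L^2)*P^6) := by ring
      _ = 256*((q^2-p^2)*P^6) := by rw [F1]
      _ < 256*(p^2*(S^2-P^2)^3) := by linarith [k]
      _ = 64*(S^2-P^2)^3*(4*p^2) := by ring
      _ = 64*(S^2-P^2)^3*((α+β)^2*L^2) := by rw [F2]
      _ = 64*(S^2-P^2)^3*(α+β)^2*L^2 := by ring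
  exact lt_of_mul_lt_mul_right final (le_of_lt hL2)


lemma core_pos2 (σ L α β : ℝ) (hσ : 0 < σ) (hL9 : 9 ≤ σ*L) (hα : σ ≤ α) (hβ : σ ≤ β)
    (hne : α ≠ β) :
    (8*Real.sinh ((α+β)*(L/2))^3/(α+β))^2
      < 8*Real.sinh (α*L)^3/(2*α)*(8*Real.sinh (β*L)^3/(2*β)) := by
  rcases lt_or_gt_of_ne hne with h | h
  · have hh := branch_pos σ L β α hσ hL9 hα h
    rw [add_comm β α] at hh
    exact hh.trans_eq (mul_comm _ _)
  · exact branch_pos σ L α β hσ hL9 hβ h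

lemma core_mixed2 (σ L α β : ℝ) (hσ : 0 < σ) (hL9 : 9 ≤ σ*L) (hα : σ ≤ α) (hβ : σ ≤ -β)
    (hab : σ ≤ |α+β|) :
    (8*Real.sinh ((α+β)*(L/2))^3/(α+β))^2
      < 8*Real.sinh (α*L)^3/(2*α)*(8*Real.sinh (β*L)^3/(2*β)) := by
  have hα0 : (0:ℝ) < α := lt_of_lt_of_le hσ hα
  have hβ0 : β < 0 := by linarith
  have hαne : α ≠ 0 := ne_of_gt hα0
  have hβne : β ≠ 0 := ne_of_lt hβ0
  rcases abs_cases (α+β) with ⟨he, h0⟩ | ⟨he, h0⟩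
  · exact branch_mixed σ L α β hσ hL9 hα hβ (he ▸ hab)
  · have h1 : σ ≤ -β + -α := by rw [he] at hab; linarith
    have hh := branch_mixed σ L (-β) (-α) hσ hL9 hβ (by linarith) h1
    rw [show (-β) + -α = -(α+β) by ring, show -(α+β)*(L/2) = -((α+β)*(L/2)) by ring,
      show -β*L = -(β*L) by ring, show -α*L = -(α*L) by ring,
      Real.sinh_neg, Real.sinh_neg, Real.sinh_neg] at hh
    have eqL : (8*(-Real.sinh ((α+β)*(L/2)))^3/(-(α+β)))^2
        = (8*Real.sinh ((α+β)*(L/2))^3/(α+β))^2 := by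
      rw [show (8*(-Real.sinh ((α+β)*(L/2)))^3) = -(8*Real.sinh ((α+β)*(L/2))^3) by ring,
        neg_div_neg_eq]
    have eqR : 8*(-Real.sinh (β*L))^3/(2*(-β))*(8*(-Real.sinh (α*L))^3/(2*(-α)))
        = 8*Real.sinh (α*L)^3/(2*α)*(8*Real.sinh (β*L)^3/(2*β)) := by
      field_simp
    rw [← eqL, ← eqR]
    exact hh

lemma core_neg2 (σ L α β : ℝ) (hσ : 0 < σ) (hL9 : 9 ≤ σ*L) (hα : σ ≤ -α) (hβ : σ ≤ -β)
    (hne : α ≠ β) :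
    (8*Real.sinh ((α+β)*(L/2))^3/(α+β))^2
      < 8*Real.sinh (α*L)^3/(2*α)*(8*Real.sinh (β*L)^3/(2*β)) := by
  have hα0 : α < 0 := by linarith
  have hβ0 : β < 0 := by linarith
  have hh := core_pos2 σ L (-α) (-β) hσ hL9 hα hβ (by intro h; exact hne (by linarith [neg_injective h]))
  rw [show (-α) + -β = -(α+β) by ring, show -(α+β)*(L/2) = -((α+β)*(L/2)) by ring,
    show -β*L = -(β*L) by ring, show -α*L = -(α*L) by ring,
    Real.sinh_neg, Real.sinh_neg, Real.sinh_neg] at hh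
  have eqL : (8*(-Real.sinh ((α+β)*(L/2)))^3/(-(α+β)))^2
      = (8*Real.sinh ((α+β)*(L/2))^3/(α+β))^2 := by
    rw [show (8*(-Real.sinh ((α+β)*(L/2)))^3) = -(8*Real.sinh ((α+β)*(L/2))^3) by ring,
      neg_div_neg_eq]
  have eqR : 8*(-Real.sinh (α*L))^3/(2*(-α))*(8*(-Real.sinh (β*L))^3/(2*(-β)))
      = 8*Real.sinh (α*L)^3/(2*α)*(8*Real.sinh (β*L)^3/(2*β)) := by
    field_simp
  rw [← eqL, ← eqR]
  exact hh

lemma core_all (σ L α β : ℝ) (hσ : 0 < σ) (hL9 : 9 ≤ σ*L) (hne : α ≠ β)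
    (ha : σ ≤ |α|) (hb : σ ≤ |β|) (hab : σ ≤ |α+β|) :
    (8*Real.sinh ((α+β)*(L/2))^3/(α+β))^2
      < 8*Real.sinh (α*L)^3/(2*α)*(8*Real.sinh (β*L)^3/(2*β)) := by
  rcases abs_cases α with ⟨hea, ha0⟩ | ⟨hea, ha0⟩ <;>
    rcases abs_cases β with ⟨heb, hb0⟩ | ⟨heb, hb0⟩
  · exact core_pos2 σ L α β hσ hL9 (hea ▸ ha) (heb ▸ hb) hne
  · exact core_mixed2 σ L α β hσ hL9 (hea ▸ ha) (heb ▸ hb) hab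
  · have hh := core_mixed2 σ L β α hσ hL9 (heb ▸ hb) (hea ▸ ha) (by rwa [add_comm β α])
    rw [add_comm β α] at hh
    exact hh.trans_eq (mul_comm _ _)
  · exact core_neg2 σ L α β hσ hL9 (hea ▸ ha) (heb ▸ hb) hne


lemma disc (σ K α β : ℝ) (hσ : 0 < σ) (hK : 1 < K) (hL9 : 9 ≤ σ * Real.log K)
    (hne : α ≠ β) (ha : σ ≤ |α|) (hb : σ ≤ |β|) (hab : σ ≤ |α+β|) :
    ((K^(α+β)-1)^3/(α+β))^2 < ((K^(2*α)-1)^3/(2*α)) * ((K^(2*β)-1)^3/(2*β)) := by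
  have hK0 : (0:ℝ) < K := by linarith
  set L := Real.log K with hLdef
  have hfact : ∀ γ : ℝ, (K^γ - 1)^3/γ = Real.exp (3*(γ*(L/2))) * (8*Real.sinh (γ*(L/2))^3/γ) := by
    intro γ
    have base : K^γ - 1 = Real.exp (γ*(L/2)) * (2*Real.sinh (γ*(L/2))) := by
      rw [Real.rpow_def_of_pos hK0, hexp_sinh, show 2*(γ*(L/2)) = L*γ by ring]
    have e3 : Real.exp (3*(γ*(L/2))) = Real.exp (γ*(L/2))^3 := by
      rw [show 3*(γ*(L/2)) = γ*(L/2)+γ*(L/2)+γ*(L/2) by ring, Real.exp_add, Real.exp_add]; ring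
    rw [base, e3]
    ring
  have eL : ((K^(α+β)-1)^3/(α+β))^2
      = Real.exp (3*((α+β)*L)) * ((8*Real.sinh ((α+β)*(L/2))^3/(α+β))^2) := by
    rw [hfact (α+β), mul_pow, ← Real.exp_nat_mul]
    congr 2
    push_cast
    ring
  have eR : ((K^(2*α)-1)^3/(2*α)) * ((K^(2*β)-1)^3/(2*β))
      = Real.exp (3*((α+β)*L)) * (8*Real.sinh (α*L)^3/(2*α)*(8*Real.sinh (β*L)^3/(2*β))) := by
    rw [hfact (2*α), hfact (2*β),
      show 2*α*(L/2) = α*L by ring, show 2*β*(L/2) = β*L by ring,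
      show Real.exp (3*(α*L)) * (8*Real.sinh (α*L)^3/(2*α)) * (Real.exp (3*(β*L)) * (8*Real.sinh (β*L)^3/(2*β)))
        = (Real.exp (3*(α*L)) * Real.exp (3*(β*L))) * (8*Real.sinh (α*L)^3/(2*α)*(8*Real.sinh (β*L)^3/(2*β))) by ring,
      ← Real.exp_add, show 3*(α*L) + 3*(β*L) = 3*((α+β)*L) by ring]
  rw [eL, eR]
  exact mul_lt_mul_of_pos_left (core_all σ L α β hσ hL9 hne ha hb hab) (Real.exp_pos _)


lemma tpos (K γ : ℝ) (hK : 1 < K) (hγ : γ ≠ 0) : 0 < (K^γ - 1)^3/γ := by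
  have hK0 : (0:ℝ) < K := by linarith
  rcases hγ.lt_or_gt with h | h
  · have h1 : K^γ < 1 := Real.rpow_lt_one_of_one_lt_of_neg hK h
    have h2 : (K^γ - 1)^3 < 0 := Odd.pow_neg (by decide) (by linarith)
    exact div_pos_of_neg_of_neg h2 h
  · have h1 : 1 < K^γ := Real.one_lt_rpow_iff_of_pos hK0 |>.mpr (Or.inl ⟨hK, h⟩)
    have h2 : 0 < (K^γ - 1)^3 := pow_pos (by linarith) 3
    exact div_pos h2 h

lemma quad (t1 t2 t3 x y : ℝ) (h1 : 0 < t1) (h3 : 0 < t3) (hd : t2^2 < t1*t3)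
    (hxy : x ≠ 0 ∨ y ≠ 0) : 0 < t1*x^2 + 2*t2*(x*y) + t3*y^2 := by
  have hQ : 0 < t1*(t1*x^2 + 2*t2*(x*y) + t3*y^2) := by
    have hid : t1*(t1*x^2 + 2*t2*(x*y) + t3*y^2) = (t1*x+t2*y)^2 + (t1*t3 - t2^2)*y^2 := by ring
    rcases hxy with hx | hy
    · rcases eq_or_ne y 0 with hy0 | hy0
      · rw [hid, hy0]
        have : (0:ℝ) < (t1*x + t2*0)^2 := by
          have : t1*x + t2*0 ≠ 0 := by simpa using mul_ne_zero (ne_of_gt h1) hx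
          positivity
        nlinarith [this]
      · rw [hid]
        have h5 : 0 < (t1*t3 - t2^2)*y^2 := mul_pos (by linarith) (by positivity)
        nlinarith [sq_nonneg (t1*x+t2*y)]
    · rw [hid]
      have h5 : 0 < (t1*t3 - t2^2)*y^2 := mul_pos (by linarith) (by positivity)
      nlinarith [sq_nonneg (t1*x+t2*y)]
  by_contra hcon
  push_neg at hcon
  nlinarith [mul_nonpos_of_nonneg_of_nonpos h1.le hcon]

lemma Ival (c c' α β K ρ : ℝ) (hρ : 0 < ρ) (hK : 1 < K)
    (hα : α ≠ 0) (hβ : β ≠ 0) (hab : α + β ≠ 0) :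
    (∫ s in ρ..(K*ρ), (c * s ^ α + c' * s ^ β) ^ 2 * s⁻¹)
      = c^2*(((K*ρ)^(2*α) - ρ^(2*α))/(2*α)) + 2*c*c'*(((K*ρ)^(α+β) - ρ^(α+β))/(α+β))
        + c'^2*(((K*ρ)^(2*β) - ρ^(2*β))/(2*β)) := by
  have hKρ : 0 < K*ρ := by positivity
  have hle : ρ ≤ K*ρ := le_mul_of_one_le_left hρ.le hK.le
  have hpos : ∀ s ∈ Set.uIcc ρ (K*ρ), 0 < s := by
    intro s hs
    rw [Set.uIcc_of_le hle] at hs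
    exact lt_of_lt_of_le hρ hs.1
  have hne : ∀ s ∈ Set.uIcc ρ (K*ρ), s ≠ 0 := fun s hs => ne_of_gt (hpos s hs)
  have h0ni : (0:ℝ) ∉ Set.uIcc ρ (K*ρ) := fun h => lt_irrefl 0 (hpos 0 h)
  -- rewrite integrand
  have hcong : Set.EqOn (fun s => (c * s ^ α + c' * s ^ β) ^ 2 * s⁻¹)
      (fun s => c^2*s^(2*α-1) + 2*c*c'*s^(α+β-1) + c'^2*s^(2*β-1)) (Set.uIcc ρ (K*ρ)) := by
    intro s hs
    have hs0 : 0 < s := hpos s hs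
    simp only
    have h2a : s^(2*α-1) = s^α*s^α*s^(-1:ℝ) := by
      rw [show 2*α-1 = α+α+(-1) by ring, Real.rpow_add hs0, Real.rpow_add hs0]
    have h2b : s^(2*β-1) = s^β*s^β*s^(-1:ℝ) := by
      rw [show 2*β-1 = β+β+(-1) by ring, Real.rpow_add hs0, Real.rpow_add hs0]
    have h2c : s^(α+β-1) = s^α*s^β*s^(-1:ℝ) := by
      rw [show α+β-1 = α+β+(-1) by ring, Real.rpow_add hs0, Real.rpow_add hs0]
    rw [h2a, h2b, h2c, Real.rpow_neg_one]
    ring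
  rw [intervalIntegral.integral_congr hcong]
  have hint : ∀ d γ : ℝ, IntervalIntegrable (fun s : ℝ => d*s^γ) volume ρ (K*ρ) := by
    intro d γ
    apply ContinuousOn.intervalIntegrable
    exact continuousOn_const.mul (continuousOn_id.rpow_const (fun s hs => Or.inl (hne s hs)))
  have hval : ∀ γ : ℝ, γ ≠ 0 → (∫ s in ρ..(K*ρ), s^(γ-1)) = ((K*ρ)^γ - ρ^γ)/γ := by
    intro γ hγ
    rw [integral_rpow (Or.inr ⟨by intro h; apply hγ; linarith, h0ni⟩)]
    norm_num
  rw [intervalIntegral.integral_add ((hint _ _).add (hint _ _)) (hint _ _),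
      intervalIntegral.integral_add (hint _ _) (hint _ _),
      intervalIntegral.integral_const_mul, intervalIntegral.integral_const_mul,
      intervalIntegral.integral_const_mul,
      hval (2*α) (by simpa using hα), hval (α+β) hab, hval (2*β) (by simpa using hβ)]

theorem stmt_2 (σ : ℝ) (hσ : 0 < σ) :
    ∃ K₁ : ℝ, 2 < K₁ ∧
      ∀ α β : ℝ, α ≠ β → σ ≤ |α| → σ ≤ |β| → σ ≤ |α + β| →
        ∀ K : ℝ, K₁ ≤ K → ∀ r : ℝ, 0 < r →
          ∀ c c' : ℝ, (c, c') ≠ (0, 0) →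
            (fun I : ℝ → ℝ =>
              I (K ^ 2 * r) - 2 * I (K * r) + I r > 0)
              (fun ρ => ∫ s in ρ..(K * ρ), (c * s ^ α + c' * s ^ β) ^ 2 * s⁻¹) := by
  refine ⟨Real.exp (9/σ) + 3, by linarith [Real.exp_pos (9/σ)], ?_⟩
  intro α β hne ha hb hab K hKK r hr c c' hcc
  have hK1 : 1 < K := by linarith [Real.exp_pos (9/σ)]
  have hK0 : (0:ℝ) < K := by linarith
  have hL9 : 9 ≤ σ * Real.log K := by
    have h1 : Real.exp (9/σ) ≤ K := by linarith
    have h2 : 9/σ ≤ Real.log K := by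
      rw [← Real.log_exp (9/σ)]
      exact (Real.log_le_log_iff (Real.exp_pos _) (by linarith)).mpr h1
    have h3 : σ*(9/σ) ≤ σ*Real.log K := mul_le_mul_of_nonneg_left h2 hσ.le
    have h4 : σ*(9/σ) = 9 := by field_simp
    linarith
  have hα0 : α ≠ 0 := fun h => by rw [h, abs_zero] at ha; linarith
  have hβ0 : β ≠ 0 := fun h => by rw [h, abs_zero] at hb; linarith
  have hab0 : α + β ≠ 0 := fun h => by rw [h, abs_zero] at hab; linarith
  show (∫ s in (K^2*r)..(K*(K^2*r)), (c*s^α + c'*s^β)^2*s⁻¹)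
      - 2*(∫ s in (K*r)..(K*(K*r)), (c*s^α + c'*s^β)^2*s⁻¹)
      + (∫ s in r..(K*r), (c*s^α + c'*s^β)^2*s⁻¹) > 0
  rw [Ival c c' α β K (K^2*r) (by positivity) hK1 hα0 hβ0 hab0,
      Ival c c' α β K (K*r) (by positivity) hK1 hα0 hβ0 hab0,
      Ival c c' α β K r hr hK1 hα0 hβ0 hab0]
  have E1 : ∀ γ:ℝ, (K*(K^2*r))^γ = K^γ*(K^γ*(K^γ*r^γ)) := by
    intro γ
    rw [show K*(K^2*r) = K*(K*(K*r)) by ring, Real.mul_rpow hK0.le (by positivity),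
      Real.mul_rpow hK0.le (by positivity), Real.mul_rpow hK0.le hr.le]
  have E2 : ∀ γ:ℝ, (K^2*r)^γ = K^γ*(K^γ*r^γ) := by
    intro γ
    rw [show K^2*r = K*(K*r) by ring, Real.mul_rpow hK0.le (by positivity),
      Real.mul_rpow hK0.le hr.le]
  have E3 : ∀ γ:ℝ, (K*(K*r))^γ = K^γ*(K^γ*r^γ) := by
    intro γ
    rw [Real.mul_rpow hK0.le (by positivity), Real.mul_rpow hK0.le hr.le]
  have E4 : ∀ γ:ℝ, (K*r)^γ = K^γ*r^γ := fun γ => Real.mul_rpow hK0.le hr.le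
  have RA : r^(2*α) = r^α*r^α := by rw [show 2*α = α+α by ring, Real.rpow_add hr]
  have RB : r^(2*β) = r^β*r^β := by rw [show 2*β = β+β by ring, Real.rpow_add hr]
  have RC : r^(α+β) = r^α*r^β := Real.rpow_add hr α β
  have big : c^2*(((K*(K^2*r))^(2*α) - (K^2*r)^(2*α))/(2*α))
        + 2*c*c'*(((K*(K^2*r))^(α+β) - (K^2*r)^(α+β))/(α+β))
        + c'^2*(((K*(K^2*r))^(2*β) - (K^2*r)^(2*β))/(2*β))
      - 2*(c^2*(((K*(K*r))^(2*α) - (K*r)^(2*α))/(2*α))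
        + 2*c*c'*(((K*(K*r))^(α+β) - (K*r)^(α+β))/(α+β))
        + c'^2*(((K*(K*r))^(2*β) - (K*r)^(2*β))/(2*β)))
      + (c^2*(((K*r)^(2*α) - r^(2*α))/(2*α))
        + 2*c*c'*(((K*r)^(α+β) - r^(α+β))/(α+β))
        + c'^2*(((K*r)^(2*β) - r^(2*β))/(2*β)))
      = ((K^(2*α)-1)^3/(2*α))*(c*r^α)^2
        + 2*((K^(α+β)-1)^3/(α+β))*((c*r^α)*(c'*r^β))
        + ((K^(2*β)-1)^3/(2*β))*(c'*r^β)^2 := by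
    simp only [E1, E2, E3, E4, RA, RB, RC]
    ring
  rw [big]
  have hxy : c*r^α ≠ 0 ∨ c'*r^β ≠ 0 := by
    have h : c ≠ 0 ∨ c' ≠ 0 := by
      by_contra h
      push_neg at h
      exact hcc (by rw [h.1, h.2])
    rcases h with h | h
    · exact Or.inl (mul_ne_zero h (ne_of_gt (Real.rpow_pos_of_pos hr α)))
    · exact Or.inr (mul_ne_zero h (ne_of_gt (Real.rpow_pos_of_pos hr β)))
  exact quad _ _ _ _ _ (tpos K (2*α) hK1 (mul_ne_zero two_ne_zero hα0))
    (tpos K (2*β) hK1 (mul_ne_zero two_ne_zero hβ0))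
    (disc σ K α β hσ hK1 hL9 hne ha hb hab) hxy
end

section
/- For every σ > 0 there exists a real number K₂ = K₂(σ) > 2 with the following property: for all real α' with |α'| ≥ σ, every K ≥ K₂, every r > 0, and every (c, c') ∈ ℝ² with (c, c') ≠ (0, 0), setting Ĩ(ρ) := ∫_ρ^{Kρ} (c s^{α'} + c' s^{α'} log s)² s^{−1} ds, one has Ĩ(K²r) − 2·Ĩ(Kr) + Ĩ(r) > 0. -/
set_option maxHeartbeats 1000000
open MeasureTheory intervalIntegral Real

private lemma exp4_gt : (54:ℝ) < Real.exp 4 := by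
  have h1 := Real.exp_one_gt_d9
  have h4 : Real.exp 1 ^ (4:ℕ) = Real.exp 4 := by
    rw [Real.exp_one_pow]; norm_num
  have h2 : (2.7182818283:ℝ)^(4:ℕ) ≤ Real.exp 1 ^ (4:ℕ) :=
    pow_le_pow_left₀ (by norm_num) h1.le 4
  rw [h4] at h2
  norm_num at h2
  linarith

private lemma core0 {t : ℝ} (ht : 54 ≤ t ∨ (0 < t ∧ t ≤ 1/54)) :
    32*t^4*(t^3+t^2+t+1) < (t^4-1)^2 := by
  rcases ht with h | ⟨h0, h1⟩
  · have h0 : (0:ℝ) < t := by linarith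
    have p4 : 54*t^3 ≤ t^4 := by nlinarith [pow_pos h0 3]
    have p5 : 54*t^4 ≤ t^5 := by nlinarith [pow_pos h0 4]
    have p6 : 54*t^5 ≤ t^6 := by nlinarith [pow_pos h0 5]
    have p7 : 54*t^6 ≤ t^7 := by nlinarith [pow_pos h0 6]
    have p8 : 54*t^7 ≤ t^8 := by nlinarith [pow_pos h0 7]
    nlinarith [pow_pos h0 4, pow_pos h0 5, pow_pos h0 6, pow_pos h0 7]
  · have b4 : t^4 ≤ (1/54:ℝ)^4 := pow_le_pow_left₀ h0.le h1 4
    have b5 : t^5 ≤ (1/54:ℝ)^5 := pow_le_pow_left₀ h0.le h1 5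
    have b6 : t^6 ≤ (1/54:ℝ)^6 := pow_le_pow_left₀ h0.le h1 6
    have b7 : t^7 ≤ (1/54:ℝ)^7 := pow_le_pow_left₀ h0.le h1 7
    nlinarith [pow_pos h0 8]

private lemma core3 {t : ℝ} (ht : 54 ≤ t ∨ (0 < t ∧ t ≤ 1/54)) :
    32*t^4*(t^3+t^2+t+1) < (t^4-1)^2 * t^3 := by
  rcases ht with h | ⟨h0, h1⟩
  · have h0 : (0:ℝ) < t := by linarith
    have h3 : (1:ℝ) ≤ t^3 := one_le_pow₀ (by linarith)
    have := core0 (Or.inl h)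
    nlinarith [sq_nonneg (t^4-1), mul_le_mul_of_nonneg_left h3 (sq_nonneg (t^4-1))]
  · have b1 : t ≤ (1/54:ℝ) := h1
    have b2 : t^2 ≤ (1/54:ℝ)^2 := pow_le_pow_left₀ h0.le h1 2
    have b3 : t^3 ≤ (1/54:ℝ)^3 := pow_le_pow_left₀ h0.le h1 3
    have b4 : t^4 ≤ (1/54:ℝ)^4 := pow_le_pow_left₀ h0.le h1 4
    have A : 0 < (1-t^4)^2 - 32*t*(t^3+t^2+t+1) := by nlinarith [pow_pos h0 8]
    have := mul_pos (pow_pos h0 3) A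
    nlinarith

private lemma contOn (γ A B : ℝ) :
    ContinuousOn (fun x : ℝ => x ^ γ * (A + B * Real.log x)^2) (Set.Ioi 0) := by
  apply ContinuousOn.mul
  · exact fun x hx => (Real.continuousAt_rpow_const x γ (Or.inl (ne_of_gt hx))).continuousWithinAt
  · apply ContinuousOn.pow
    exact continuousOn_const.add (continuousOn_const.mul
      (Real.continuousOn_log.mono (fun x hx => ne_of_gt hx)))

private lemma uIcc_pos {u v : ℝ} (hu : 0 < u) (hv : 0 < v) :
    Set.uIcc u v ⊆ Set.Ioi (0:ℝ) :=
  fun x hx => lt_of_lt_of_le (lt_min hu hv) hx.1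

private lemma ii (γ A B : ℝ) {u v : ℝ} (hu : 0 < u) (hv : 0 < v) :
    IntervalIntegrable (fun x : ℝ => x ^ γ * (A + B*Real.log x)^2) volume u v :=
  (ContinuousOn.mono (contOn γ A B) (uIcc_pos hu hv)).intervalIntegrable

private lemma ii0 (γ : ℝ) {u v : ℝ} (hu : 0 < u) (hv : 0 < v) :
    IntervalIntegrable (fun x : ℝ => x ^ γ) volume u v := by
  apply ContinuousOn.intervalIntegrable
  apply ContinuousOn.mono _ (uIcc_pos hu hv)
  exact fun x hx => (Real.continuousAt_rpow_const x γ (Or.inl (ne_of_gt hx))).continuousWithinAt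

private lemma wval (γ : ℝ) (hγ : γ + 1 ≠ 0) {u v : ℝ} (hu : 0 < u) (hv : 0 < v) :
    ∫ x in u..v, x ^ γ = (v ^ (γ+1) - u ^ (γ+1))/(γ+1) := by
  rw [integral_rpow]
  right
  constructor
  · intro h; exact hγ (by linarith [congrArg (· + 1) h] )
  · intro h
    exact absurd (uIcc_pos hu hv h) (by simp)

private lemma fval (α c c' : ℝ) {x : ℝ} (hx : 0 < x) :
    (c * x ^ α + c' * x ^ α * Real.log x)^2 * x⁻¹
      = x ^ (2*α - 1) * (c + c' * Real.log x)^2 := by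
  have h : (2*α-1 : ℝ) = α + α + (-1) := by ring
  rw [h, Real.rpow_add hx, Real.rpow_add hx, Real.rpow_neg_one]
  ring

private lemma lower (γ q p m : ℝ) {r R u v : ℝ} (hr : 0 < r) (h1 : r ≤ u) (h2 : u ≤ v)
    (h3 : v ≤ R) (hm : 0 ≤ m)
    (hb : ∀ x ∈ Set.Icc u v, m ≤ (p + q*Real.log x)^2) :
    m * ∫ x in u..v, x ^ γ ≤ ∫ x in r..R, x ^ γ * (p + q*Real.log x)^2 := by
  have hu : 0 < u := lt_of_lt_of_le hr h1
  have hv : 0 < v := lt_of_lt_of_le hu h2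
  have hR : 0 < R := lt_of_lt_of_le hv h3
  have step1 : m * ∫ x in u..v, x ^ γ ≤ ∫ x in u..v, x ^ γ * (p + q*Real.log x)^2 := by
    rw [← intervalIntegral.integral_const_mul]
    apply intervalIntegral.integral_mono_on h2 ((ii0 γ hu hv).const_mul m) (ii γ p q hu hv)
    intro x hx
    have hx0 : (0:ℝ) ≤ x ^ γ := Real.rpow_nonneg (le_of_lt (lt_of_lt_of_le hu hx.1)) γ
    calc m * x ^ γ = x ^ γ * m := by ring
      _ ≤ x ^ γ * (p + q*Real.log x)^2 := mul_le_mul_of_nonneg_left (hb x hx) hx0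
  have hsplit : ∫ x in r..R, x ^ γ * (p + q*Real.log x)^2
      = (∫ x in r..u, x ^ γ * (p + q*Real.log x)^2)
        + (∫ x in u..v, x ^ γ * (p + q*Real.log x)^2)
        + (∫ x in v..R, x ^ γ * (p + q*Real.log x)^2) := by
    rw [← intervalIntegral.integral_add_adjacent_intervals (ii γ p q hr hu)
      ((ii γ p q hu hv).trans (ii γ p q hv hR)),
      ← intervalIntegral.integral_add_adjacent_intervals (ii γ p q hu hv) (ii γ p q hv hR)]
    ring
  have nn : ∀ a b : ℝ, 0 < a → a ≤ b →
      0 ≤ ∫ x in a..b, x ^ γ * (p + q*Real.log x)^2 := by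
    intro a b ha hab
    apply intervalIntegral.integral_nonneg hab
    intro x hx
    exact mul_nonneg (Real.rpow_nonneg (le_of_lt (lt_of_lt_of_le ha hx.1)) γ) (sq_nonneg _)
  rw [hsplit]
  have := nn r u hr h1
  have := nn v R hv h3
  linarith

private lemma fscale (α c c' L : ℝ) (hL : 0 < L) {x : ℝ} (hx : 0 < x) :
    L * ((c * (L*x) ^ α + c' * (L*x) ^ α * Real.log (L*x))^2 * (L*x)⁻¹)
      = L ^ (2*α) * (x ^ (2*α-1) * ((c + c' * Real.log L) + c' * Real.log x)^2) := by
  rw [fval α c c' (mul_pos hL hx), Real.mul_rpow hL.le hx.le,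
    Real.log_mul hL.ne' hx.ne']
  have h1 : L * L ^ (2*α-1) = L ^ (2*α) := by
    have h2 := Real.rpow_add hL 1 (2*α-1)
    rw [Real.rpow_one] at h2
    rw [← h2]
    congr 1
    ring
  rw [← h1]; ring

private lemma sq_bound_below {p q l L d4 : ℝ} (hq : q ≠ 0) (hl : l = -p/q) (hd4 : 0 ≤ d4)
    (hcase : L ≤ l - d4 ∨ l + d4 ≤ L) :
    q^2*d4^2 ≤ (p + q*L)^2 := by
  have hp : p = -(q*l) := by rw [hl]; field_simp
  have h2 : d4^2 ≤ (L-l)^2 := by rcases hcase with h | h <;> nlinarith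
  calc q^2*d4^2 ≤ q^2*(L-l)^2 := mul_le_mul_of_nonneg_left h2 (sq_nonneg q)
    _ = (p + q*L)^2 := by rw [hp]; ring

private lemma final_ineq (t c' lg tk m T1 WJ Wfull : ℝ) (ht0 : 0 < t)
    (hpos : 0 < c'^2 * lg^2)
    (hm : m = (t^4-1)^2*c'^2*lg^2/16)
    (hT : m * WJ ≤ T1)
    (hWJS : WJ * (t^3+t^2+t+1) = Wfull * tk)
    (hWf : 0 < Wfull)
    (hcore : 32*t^4*(t^3+t^2+t+1) < (t^4-1)^2 * tk) :
    0 < T1 - Wfull * (2*t^4*(c'*lg)^2) := by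
  have hS : 0 < t^3+t^2+t+1 := by positivity
  have key : (2*t^4*(c'*lg)^2)*(t^3+t^2+t+1) < m * tk := by
    have h1 := mul_lt_mul_of_pos_left hcore (show 0 < c'^2*lg^2/16 by positivity)
    rw [hm]; nlinarith [h1]
  have h2 : ((2*t^4*(c'*lg)^2) * Wfull) * (t^3+t^2+t+1) < (m*WJ) * (t^3+t^2+t+1) := by
    calc ((2*t^4*(c'*lg)^2) * Wfull) * (t^3+t^2+t+1)
        = ((2*t^4*(c'*lg)^2)*(t^3+t^2+t+1)) * Wfull := by ring
      _ < (m * tk) * Wfull := mul_lt_mul_of_pos_right key hWf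
      _ = m * (Wfull * tk) := by ring
      _ = m * (WJ * (t^3+t^2+t+1)) := by rw [hWJS]
      _ = (m*WJ) * (t^3+t^2+t+1) := by ring
  have h3 : (2*t^4*(c'*lg)^2) * Wfull < m*WJ := lt_of_mul_lt_mul_right h2 hS.le
  linarith

theorem stmt_3 (σ : ℝ) (hσ : 0 < σ) :
    ∃ K₂ : ℝ, 2 < K₂ ∧
      ∀ α' : ℝ, σ ≤ |α'| →
        ∀ K : ℝ, K₂ ≤ K → ∀ r : ℝ, 0 < r →
          ∀ c c' : ℝ, (c, c') ≠ (0, 0) →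
            (fun I : ℝ → ℝ =>
              I (K ^ 2 * r) - 2 * I (K * r) + I r > 0)
              (fun ρ => ∫ s in ρ..(K * ρ),
                (c * s ^ α' + c' * s ^ α' * Real.log s) ^ 2 * s⁻¹) := by
  refine ⟨max 3 (Real.exp (8/σ)), lt_of_lt_of_le (by norm_num) (le_max_left _ _), ?_⟩
  intro α' hα K hK r hr c c' hcc'
  beta_reduce
  set f : ℝ → ℝ := fun s => (c * s ^ α' + c' * s ^ α' * Real.log s) ^ 2 * s⁻¹ with hf
  -- basic facts
  have hK3 : (3:ℝ) ≤ K := le_trans (le_max_left _ _) hK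
  have hK0 : (0:ℝ) < K := by linarith
  have hK1 : (1:ℝ) < K := by linarith
  have hlogK : 0 < Real.log K := Real.log_pos hK1
  have hKr : (0:ℝ) < K * r := mul_pos hK0 hr
  have hrKr : r < K * r := by nlinarith
  have hKe : Real.exp (8/σ) ≤ K := le_trans (le_max_right _ _) hK
  have h8 : 8/σ ≤ Real.log K := (Real.le_log_iff_exp_le hK0).mpr hKe
  have hαne : α' ≠ 0 := by
    intro h0; rw [h0] at hα; simp at hα; linarith
  have h8' : 8 ≤ |α'| * Real.log K := by
    have : σ * (8/σ) ≤ |α'| * Real.log K :=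
      mul_le_mul hα h8 (by positivity) (abs_nonneg _)
    rw [mul_div_cancel₀ _ (ne_of_gt hσ)] at this
    linarith
  set t := K ^ (α'/2 : ℝ) with htdef
  have ht0 : 0 < t := Real.rpow_pos_of_pos hK0 _
  have ht54 : 54 ≤ t ∨ (0 < t ∧ t ≤ 1/54) := by
    have hexp : t = Real.exp ((α'/2) * Real.log K) := by
      rw [htdef, Real.rpow_def_of_pos hK0, mul_comm]
    rcases le_or_gt 0 α' with hpos | hneg
    · left
      have h4 : (4:ℝ) ≤ (α'/2) * Real.log K := by
        rw [abs_of_nonneg hpos] at h8'; linarith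
      calc (54:ℝ) ≤ Real.exp 4 := exp4_gt.le
        _ ≤ Real.exp ((α'/2) * Real.log K) := Real.exp_le_exp.mpr h4
        _ = t := hexp.symm
    · right
      refine ⟨ht0, ?_⟩
      have h4 : (α'/2) * Real.log K ≤ -4 := by
        rw [abs_of_neg hneg] at h8'; nlinarith
      have h2 : t ≤ Real.exp (-4) := by
        rw [hexp]; exact Real.exp_le_exp.mpr h4
      have h3 : Real.exp (-4) ≤ 1/54 := by
        rw [Real.exp_neg]
        rw [inv_le_comm₀ (Real.exp_pos 4) (by norm_num)]
        norm_num
        exact exp4_gt.le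
      linarith
  have ht41 : t^4 - 1 ≠ 0 := by
    rcases ht54 with h | ⟨h1, h2⟩
    · have h4 : (1:ℝ) < t^4 := by
        nlinarith [pow_le_pow_left₀ (by norm_num : (0:ℝ) ≤ 54) h 4]
      exact sub_ne_zero.mpr (ne_of_gt h4)
    · have h4 : t^4 < 1 := by
        have := pow_le_pow_left₀ h1.le h2 4
        norm_num at this
        nlinarith [pow_pos h1 4]
      exact sub_ne_zero.mpr (ne_of_lt h4)
  -- rpow identities
  have e4 : K ^ (2*α') = t^4 := by
    rw [htdef, ← Real.rpow_natCast (K ^ (α'/2 : ℝ)) 4, ← Real.rpow_mul hK0.le]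
    congr 1; ring
  have e8 : ((K^(2:ℕ) : ℝ)) ^ (2*α') = t^8 := by
    rw [← Real.rpow_natCast K 2, ← Real.rpow_mul hK0.le,
      htdef, ← Real.rpow_natCast (K ^ (α'/2 : ℝ)) 8, ← Real.rpow_mul hK0.le]
    congr 1; push_cast; ring
  have elog2 : Real.log ((K:ℝ)^(2:ℕ)) = 2 * Real.log K := by
    rw [Real.log_pow]; push_cast; ring
  -- transform the three integrals
  have hA : (∫ s in (K^2*r)..(K*(K^2*r)), f s)
      = ∫ x in r..(K*r), (K^2:ℝ) • f ((K^2:ℝ)*x) := by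
    rw [intervalIntegral.integral_smul, intervalIntegral.smul_integral_comp_mul_left f ((K:ℝ)^2)]
    congr 1
    ring
  have hB : (∫ s in (K*r)..(K*(K*r)), f s)
      = ∫ x in r..(K*r), K • f (K*x) := by
    rw [intervalIntegral.integral_smul, intervalIntegral.smul_integral_comp_mul_left f K]
  rw [hA, hB]
  have hA2 : (∫ x in r..(K*r), (K^2:ℝ) • f ((K^2:ℝ)*x))
      = ∫ x in r..(K*r), t^8 * (x ^ (2*α'-1) * ((c + c' * (2*Real.log K)) + c' * Real.log x)^2) := by
    apply intervalIntegral.integral_congr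
    intro x hx
    have hx0 : 0 < x := uIcc_pos hr hKr hx
    have hs := fscale α' c c' (K^2) (by positivity) hx0
    simp only [hf, smul_eq_mul]
    rw [hs, e8, elog2]
  have hB2 : (∫ x in r..(K*r), K • f (K*x))
      = ∫ x in r..(K*r), t^4 * (x ^ (2*α'-1) * ((c + c' * Real.log K) + c' * Real.log x)^2) := by
    apply intervalIntegral.integral_congr
    intro x hx
    have hx0 : 0 < x := uIcc_pos hr hKr hx
    have hs := fscale α' c c' K hK0 hx0
    simp only [hf, smul_eq_mul]
    rw [hs, e4]
  have hC2 : (∫ x in r..(K*r), f x)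
      = ∫ x in r..(K*r), x ^ (2*α'-1) * (c + c' * Real.log x)^2 := by
    apply intervalIntegral.integral_congr
    intro x hx
    have hx0 : 0 < x := uIcc_pos hr hKr hx
    simp only [hf]
    exact fval α' c c' hx0
  rw [hA2, hB2, hC2]
  -- notation
  have hne2α : (2*α' - 1) + 1 ≠ 0 := by
    intro hcon; apply hαne; linarith
  -- integrability
  have iG2 := (ii (2*α'-1) (c + c'*(2*Real.log K)) c' hr hKr).const_mul (t^8)
  have iG1 := (ii (2*α'-1) (c + c'*Real.log K) c' hr hKr).const_mul (t^4)
  have iG0 := ii (2*α'-1) c c' hr hKr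
  have iT1 := ii (2*α'-1) ((t^4-1)*c + 2*t^4*(c'*Real.log K)) ((t^4-1)*c') hr hKr
  have iW := ii0 (2*α'-1) hr hKr
  have hcomb : (∫ x in r..(K*r), t^8 * (x ^ (2*α'-1) * ((c + c' * (2*Real.log K)) + c' * Real.log x)^2))
      - 2 * (∫ x in r..(K*r), t^4 * (x ^ (2*α'-1) * ((c + c' * Real.log K) + c' * Real.log x)^2))
      + (∫ x in r..(K*r), x ^ (2*α'-1) * (c + c' * Real.log x)^2)
      = (∫ x in r..(K*r), x ^ (2*α'-1) * (((t^4-1)*c + 2*t^4*(c'*Real.log K)) + ((t^4-1)*c')*Real.log x)^2)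
        - (∫ x in r..(K*r), x ^ (2*α'-1)) * (2*t^4*(c'*Real.log K)^2) := by
    rw [← intervalIntegral.integral_mul_const, ← intervalIntegral.integral_const_mul (2:ℝ),
      ← intervalIntegral.integral_sub iG2 (iG1.const_mul 2),
      ← intervalIntegral.integral_sub iT1 (iW.mul_const (2*t^4*(c'*Real.log K)^2)),
      ← intervalIntegral.integral_add ((iG2.sub (iG1.const_mul 2))) iG0]
    apply intervalIntegral.integral_congr
    intro x _
    ring
  rw [hcomb]
  have hWfull_pos : 0 < ∫ x in r..(K*r), x ^ (2*α'-1) :=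
    intervalIntegral_pos_of_pos_on iW
      (fun x hx => Real.rpow_pos_of_pos (lt_trans hr hx.1) _) hrKr
  rcases eq_or_ne c' 0 with hc' | hc'
  · -- case c' = 0
    have hcne : c ≠ 0 := by
      intro hc0; exact hcc' (by rw [hc0, hc'])
    have hz : (∫ x in r..(K*r), x ^ (2*α'-1)) * (2*t^4*(c'*Real.log K)^2) = 0 := by
      rw [hc']; ring
    have hT1 : 0 < ∫ x in r..(K*r), x ^ (2*α'-1) * (((t^4-1)*c + 2*t^4*(c'*Real.log K)) + ((t^4-1)*c')*Real.log x)^2 := by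
      apply intervalIntegral_pos_of_pos_on iT1 _ hrKr
      intro x hx
      have hx0 : 0 < x := lt_trans hr hx.1
      have hval : ((t^4-1)*c + 2*t^4*(c'*Real.log K)) + ((t^4-1)*c')*Real.log x = (t^4-1)*c := by
        rw [hc']; ring
      rw [hval]
      have hne : (t^4-1)*c ≠ 0 := mul_ne_zero ht41 hcne
      have := lt_of_le_of_ne (sq_nonneg ((t^4-1)*c)) (Ne.symm (pow_ne_zero 2 hne))
      exact mul_pos (Real.rpow_pos_of_pos hx0 _) this
    rw [gt_iff_lt, ← sub_pos] at *
    linarith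
  · -- case c' ≠ 0
    have hq : (t^4-1)*c' ≠ 0 := mul_ne_zero ht41 hc'
    -- values of weight integrals
    have hWv : ∀ u v : ℝ, 0 < u → 0 < v →
        (∫ x in u..v, x ^ (2*α'-1)) = (v ^ (2*α') - u ^ (2*α'))/(2*α') := by
      intro u v hu hv
      have h2 := wval (2*α'-1) hne2α hu hv
      have h3 : (2*α'-1) + 1 = 2*α' := by ring
      rw [h3] at h2
      exact h2
    have m0 : (1:ℝ) ≤ K ^ ((1:ℝ)/4) := by
      have := Real.rpow_le_rpow_of_exponent_le hK1.le (by norm_num : (0:ℝ) ≤ (1:ℝ)/4)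
      rwa [Real.rpow_zero] at this
    have m1 : K ^ ((1:ℝ)/4) ≤ K ^ ((3:ℝ)/4) :=
      Real.rpow_le_rpow_of_exponent_le hK1.le (by norm_num)
    have m2 : K ^ ((3:ℝ)/4) ≤ K := by
      have := Real.rpow_le_rpow_of_exponent_le hK1.le (by norm_num : (3:ℝ)/4 ≤ 1)
      rwa [Real.rpow_one] at this
    have hv14 : 0 < r * K ^ ((1:ℝ)/4) := by positivity
    have hv34 : 0 < r * K ^ ((3:ℝ)/4) := by positivity
    have ord1 : r ≤ r * K ^ ((1:ℝ)/4) := by nlinarith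
    have ord2 : r * K ^ ((1:ℝ)/4) ≤ K * r := by nlinarith
    have ord3 : r ≤ r * K ^ ((3:ℝ)/4) := by nlinarith
    have ord4 : r * K ^ ((3:ℝ)/4) ≤ K * r := by nlinarith
    have e3 : (K ^ ((3:ℝ)/4)) ^ (2*α') = t^3 := by
      rw [← Real.rpow_mul hK0.le, htdef, ← Real.rpow_natCast (K ^ (α'/2 : ℝ)) 3,
        ← Real.rpow_mul hK0.le]
      congr 1; push_cast; ring
    have e1' : (K ^ ((1:ℝ)/4)) ^ (2*α') = t := by
      rw [← Real.rpow_mul hK0.le, htdef]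
      congr 1; ring
    have hWfull : (∫ x in r..(K*r), x ^ (2*α'-1))
        = (r ^ (2*α') * t^4 - r ^ (2*α'))/(2*α') := by
      rw [hWv r (K*r) hr hKr, Real.mul_rpow hK0.le hr.le, e4]; ring
    set lg := Real.log K with hlg
    set l := -(((t^4-1)*c + 2*t^4*(c'*lg))) / ((t^4-1)*c') with hl
    have hbase : ∀ x : ℝ, 0 < x →
        ((t^4-1)*c + 2*t^4*(c'*lg)) + ((t^4-1)*c')*Real.log x
          = ((t^4-1)*c + 2*t^4*(c'*lg)) + ((t^4-1)*c')*Real.log x := fun _ _ => rfl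
    rcases le_or_gt (Real.log r + lg/2) l with hroot | hroot
    · -- J = [r, r K^(1/4)]
      have hlow := lower (2*α'-1) ((t^4-1)*c') ((t^4-1)*c + 2*t^4*(c'*lg))
          (((t^4-1)*c')^2*(lg/4)^2) hr le_rfl ord1 ord2 (by positivity) ?hb
      case hb =>
        intro x hx
        have hx0 : 0 < x := lt_of_lt_of_le hr hx.1
        apply sq_bound_below hq hl (by positivity)
        left
        have hlogx : Real.log x ≤ Real.log r + (1/4)*lg := by
          have h4 := Real.log_le_log hx0 hx.2
          rwa [Real.log_mul hr.ne' (by positivity), Real.log_rpow hK0] at h4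
        linarith
      have hWJ : (∫ x in r..(r * K ^ ((1:ℝ)/4)), x ^ (2*α'-1))
          = (r ^ (2*α') * t - r ^ (2*α'))/(2*α') := by
        rw [hWv r _ hr hv14, Real.mul_rpow hr.le (by positivity), e1']
      rw [gt_iff_lt, ← sub_pos]
      have := final_ineq t c' lg 1 (((t^4-1)*c')^2*(lg/4)^2) _ _ _ ht0
        (by positivity) (by ring) hlow
        (by rw [hWJ, hWfull]; ring) hWfull_pos
        (by simpa using core0 ht54)
      linarith [this]
    · -- J = [r K^(3/4), K r]
      have hlow := lower (2*α'-1) ((t^4-1)*c') ((t^4-1)*c + 2*t^4*(c'*lg))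
          (((t^4-1)*c')^2*(lg/4)^2) hr ord3 ord4 le_rfl (by positivity) ?hb
      case hb =>
        intro x hx
        have hx0 : 0 < x := lt_of_lt_of_le hv34 hx.1
        apply sq_bound_below hq hl (by positivity)
        right
        have hlogx : Real.log r + (3/4)*lg ≤ Real.log x := by
          have h4 := Real.log_le_log hv34 hx.1
          rwa [Real.log_mul hr.ne' (by positivity), Real.log_rpow hK0] at h4
        linarith
      have hWJ : (∫ x in (r * K ^ ((3:ℝ)/4))..(K*r), x ^ (2*α'-1))
          = (r ^ (2*α') * t^4 - r ^ (2*α') * t^3)/(2*α') := by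
        rw [hWv _ (K*r) hv34 hKr, Real.mul_rpow hK0.le hr.le, e4,
          Real.mul_rpow hr.le (by positivity), e3]; ring
      rw [gt_iff_lt, ← sub_pos]
      have := final_ineq t c' lg (t^3) (((t^4-1)*c')^2*(lg/4)^2) _ _ _ ht0
        (by positivity) (by ring) hlow
        (by rw [hWJ, hWfull]; ring) hWfull_pos
        (core3 ht54)
      linarith [this]
end

section
/- Let Z ⊂ ℝⁿ be a compact subset and f : Z → ℝⁿ a Lipschitz map. Call x ∈ Z a critical point of f if there exists a proper linear subspace T_x ⊊ ℝⁿ such that for every sequence of points x_j ∈ Z with x_j ≠ x and x_j → x, if (f(x_j) − f(x))/|x_j − x| converges to some v ∈ ℝⁿ, then v ∈ T_x. Let Crit_f denote the set of critical points of f. Then the n-dimensional Hausdorff measure of f(Crit_f) is zero. -/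
open MeasureTheory Filter Module
open scoped Topology ENNReal NNReal Pointwise

open Metric Set in
/-- Sequential criticality implies a uniform estimate: near `x`, normalized increments of `f`
are uniformly close to the subspace `T` (measured via the orthogonal projection). -/
theorem stmt_6_aux_unif {n : ℕ} {Z : Set (EuclideanSpace ℝ (Fin n))}
    {f : EuclideanSpace ℝ (Fin n) → EuclideanSpace ℝ (Fin n)} {L : NNReal}
    (hf : LipschitzOnWith L f Z) {x : EuclideanSpace ℝ (Fin n)} (hx : x ∈ Z)
    {T : Submodule ℝ (EuclideanSpace ℝ (Fin n))}
    (hT : ∀ x_j : ℕ → EuclideanSpace ℝ (Fin n),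
          (∀ j, x_j j ∈ Z) → (∀ j, x_j j ≠ x) →
          Tendsto x_j atTop (nhds x) →
          ∀ v : EuclideanSpace ℝ (Fin n),
            Tendsto (fun j => (‖x_j j - x‖)⁻¹ • (f (x_j j) - f x)) atTop (nhds v) →
            v ∈ T)
    {ε : ℝ} (hε : 0 < ε) :
    ∃ δ > 0, ∀ y ∈ Z, y ≠ x → ‖y - x‖ ≤ δ →
      ‖(‖y - x‖)⁻¹ • (f y - f x) -
        (Submodule.orthogonalProjection T ((‖y - x‖)⁻¹ • (f y - f x)) : EuclideanSpace ℝ (Fin n))‖ ≤ ε := by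
  by_contra h
  push_neg at h
  choose y hyZ hyne hyd hye using fun j : ℕ => h (1 / ((j : ℝ) + 1)) (by positivity)
  have hsub : Tendsto (fun j => y j - x) atTop (𝓝 0) :=
    squeeze_zero_norm (fun j => hyd j) tendsto_one_div_add_atTop_nhds_zero_nat
  have hytend : Tendsto y atTop (𝓝 x) := tendsto_sub_nhds_zero_iff.mp hsub
  set w := fun j => (‖y j - x‖)⁻¹ • (f (y j) - f x) with hw
  have hwb : ∀ j, w j ∈ closedBall (0 : EuclideanSpace ℝ (Fin n)) L := by
    intro j
    have h2 : (0 : ℝ) < ‖y j - x‖ := by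
      simpa [norm_pos_iff, sub_ne_zero] using hyne j
    have h1 : ‖f (y j) - f x‖ ≤ (L : ℝ) * ‖y j - x‖ := by
      have := hf.dist_le_mul _ (hyZ j) _ hx
      simpa [dist_eq_norm] using this
    rw [mem_closedBall, dist_zero_right, norm_smul, norm_inv, norm_norm]
    calc ‖y j - x‖⁻¹ * ‖f (y j) - f x‖ ≤ ‖y j - x‖⁻¹ * ((L : ℝ) * ‖y j - x‖) := by gcongr
      _ = L := by field_simp
  obtain ⟨v, -, φ, hφ, hconv⟩ :=
    (isCompact_closedBall (0 : EuclideanSpace ℝ (Fin n)) L).tendsto_subseq hwb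
  have hvT : v ∈ T :=
    hT (y ∘ φ) (fun j => hyZ _) (fun j => hyne _) (hytend.comp hφ.tendsto_atTop) v hconv
  have hg : Continuous fun u : EuclideanSpace ℝ (Fin n) =>
      ‖u - (Submodule.orthogonalProjection T u : EuclideanSpace ℝ (Fin n))‖ :=
    (continuous_id.sub ((T.subtypeL.comp (Submodule.orthogonalProjection T)).continuous)).norm
  have hlim : Tendsto (fun j =>
      ‖w (φ j) - (Submodule.orthogonalProjection T (w (φ j)) : EuclideanSpace ℝ (Fin n))‖) atTop
      (𝓝 ‖v - (Submodule.orthogonalProjection T v : EuclideanSpace ℝ (Fin n))‖) :=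
    (hg.tendsto v).comp hconv
  have hεle : ε ≤ ‖v - (Submodule.orthogonalProjection T v : EuclideanSpace ℝ (Fin n))‖ :=
    ge_of_tendsto' hlim fun j => (hye (φ j)).le
  rw [show ((Submodule.orthogonalProjection T v : _) : EuclideanSpace ℝ (Fin n)) = v from Submodule.starProjection_eq_self_iff.mpr hvT, sub_self, norm_zero] at hεle
  exact absurd hεle (not_le.mpr hε)

open Metric Set in
/-- The local measure estimate at a critical point: images of small balls have measure at most
`ε` times the measure of the ball. -/
theorem stmt_6_aux_local {n : ℕ} {Z : Set (EuclideanSpace ℝ (Fin n))}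
    {f : EuclideanSpace ℝ (Fin n) → EuclideanSpace ℝ (Fin n)} {L : NNReal}
    (hf : LipschitzOnWith L f Z) {x : EuclideanSpace ℝ (Fin n)} (hx : x ∈ Z)
    {T : Submodule ℝ (EuclideanSpace ℝ (Fin n))} (hTne : T ≠ ⊤)
    (hT : ∀ x_j : ℕ → EuclideanSpace ℝ (Fin n),
          (∀ j, x_j j ∈ Z) → (∀ j, x_j j ≠ x) →
          Tendsto x_j atTop (nhds x) →
          ∀ v : EuclideanSpace ℝ (Fin n),
            Tendsto (fun j => (‖x_j j - x‖)⁻¹ • (f (x_j j) - f x)) atTop (nhds v) →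
            v ∈ T)
    {ε : ℝ≥0∞} (hε : 0 < ε) :
    ∃ δ > 0, ∀ r : ℝ, 0 < r → r < δ →
      volume (f '' (Z ∩ closedBall x r)) ≤ ε * volume (closedBall x r) := by
  set K : Set (EuclideanSpace ℝ (Fin n)) := (T : Set (EuclideanSpace ℝ (Fin n))) ∩ closedBall 0 L with hK
  have hKc : IsCompact K :=
    (isCompact_closedBall (0 : EuclideanSpace ℝ (Fin n)) L).inter_left T.closed_of_finiteDimensional
  have hK0 : volume K = 0 :=
    measure_mono_null inter_subset_left (Measure.addHaar_submodule volume T hTne)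
  set c : ℝ≥0∞ := ε * volume (ball (0 : EuclideanSpace ℝ (Fin n)) 1) with hc
  have hcpos : 0 < c :=
    ENNReal.mul_pos hε.ne' (measure_ball_pos volume (0 : EuclideanSpace ℝ (Fin n)) one_pos).ne'
  have htends := tendsto_measure_cthickening_of_isCompact (μ := (volume : Measure (EuclideanSpace ℝ (Fin n)))) hKc
  rw [hK0] at htends
  have hev : ∀ᶠ s in 𝓝 (0 : ℝ), volume (cthickening s K) < c :=
    htends.eventually (gt_mem_nhds hcpos)
  obtain ⟨ε₂, hsmall, hε₂⟩ :=
    ((hev.filter_mono nhdsWithin_le_nhds).and (self_mem_nhdsWithin (s := Ioi (0 : ℝ)))).exists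
  obtain ⟨δ, hδpos, hδ⟩ := stmt_6_aux_unif hf hx hT hε₂
  refine ⟨δ, hδpos, fun r hr hrδ => ?_⟩
  have hsubset : f '' (Z ∩ closedBall x r) ⊆ f x +ᵥ r • cthickening ε₂ K := by
    rintro - ⟨y, ⟨hyZ, hyB⟩, rfl⟩
    have hyx : ‖y - x‖ ≤ r := by rwa [mem_closedBall, dist_eq_norm] at hyB
    have key : r⁻¹ • (f y - f x) ∈ cthickening ε₂ K := by
      by_cases hyeq : y = x
      · subst hyeq
        have : r⁻¹ • (f y - f y) = (0 : EuclideanSpace ℝ (Fin n)) := by simp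
        rw [this]
        exact self_subset_cthickening K ⟨T.zero_mem, mem_closedBall_self L.2⟩
      · set u : EuclideanSpace ℝ (Fin n) := (‖y - x‖)⁻¹ • (f y - f x) with hu
        set p : EuclideanSpace ℝ (Fin n) := (Submodule.orthogonalProjection T u : EuclideanSpace ℝ (Fin n)) with hp
        have hup : ‖u - p‖ ≤ ε₂ := hδ y hyZ hyeq (hyx.trans hrδ.le)
        have hyxpos : (0 : ℝ) < ‖y - x‖ := by
          simpa [norm_pos_iff, sub_ne_zero] using hyeq
        set t : ℝ := ‖y - x‖ / r with ht
        have htpos : 0 < t := div_pos hyxpos hr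
        have ht1 : t ≤ 1 := (div_le_one hr).mpr hyx
        have hrepr : r⁻¹ • (f y - f x) = t • u := by
          rw [hu, smul_smul, ht]
          congr 1
          field_simp
        have hunorm : ‖u‖ ≤ (L : ℝ) := by
          have h1 : ‖f y - f x‖ ≤ (L : ℝ) * ‖y - x‖ := by
            have := hf.dist_le_mul _ hyZ _ hx
            simpa [dist_eq_norm] using this
          rw [hu, norm_smul, norm_inv, norm_norm]
          calc ‖y - x‖⁻¹ * ‖f y - f x‖ ≤ ‖y - x‖⁻¹ * ((L : ℝ) * ‖y - x‖) := by gcongr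
            _ = L := by field_simp
        have hpnorm : ‖p‖ ≤ (L : ℝ) := by
          have h1 : ‖Submodule.orthogonalProjection T u‖ ≤ ‖Submodule.orthogonalProjection T‖ * ‖u‖ :=
            (Submodule.orthogonalProjection T).le_opNorm u
          have h2 : ‖Submodule.orthogonalProjection T‖ * ‖u‖ ≤ 1 * ‖u‖ := by
            gcongr
            exact Submodule.orthogonalProjection_norm_le T
          calc ‖p‖ = ‖Submodule.orthogonalProjection T u‖ := rfl
            _ ≤ 1 * ‖u‖ := h1.trans h2
            _ = ‖u‖ := one_mul _
            _ ≤ L := hunorm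
        have hpK : t • p ∈ K := by
          refine ⟨T.smul_mem t (Submodule.orthogonalProjection T u).2, ?_⟩
          rw [mem_closedBall, dist_zero_right, norm_smul]
          calc ‖t‖ * ‖p‖ ≤ 1 * (L : ℝ) := by
                apply mul_le_mul _ hpnorm (norm_nonneg _) zero_le_one
                rw [Real.norm_eq_abs, abs_of_pos htpos]; exact ht1
            _ = L := one_mul _
        rw [hrepr]
        refine mem_cthickening_of_dist_le (t • u) (t • p) ε₂ K hpK ?_
        rw [dist_eq_norm, ← smul_sub, norm_smul, Real.norm_eq_abs, abs_of_pos htpos]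
        calc t * ‖u - p‖ ≤ 1 * ε₂ := mul_le_mul ht1 hup (norm_nonneg _) zero_le_one
          _ = ε₂ := one_mul _
    have : f y = f x +ᵥ r • (r⁻¹ • (f y - f x)) := by
      rw [smul_inv_smul₀ hr.ne']
      simp [vadd_eq_add]
    rw [this]
    exact vadd_mem_vadd_set (smul_mem_smul_set key)
  calc volume (f '' (Z ∩ closedBall x r)) ≤ volume (f x +ᵥ r • cthickening ε₂ K) :=
        measure_mono hsubset
    _ = volume (r • cthickening ε₂ K) := measure_vadd _ _ _
    _ = ENNReal.ofReal |r ^ finrank ℝ (EuclideanSpace ℝ (Fin n))| * volume (cthickening ε₂ K) :=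
        Measure.addHaar_smul volume r _
    _ ≤ ENNReal.ofReal |r ^ finrank ℝ (EuclideanSpace ℝ (Fin n))| * c := by exact mul_le_mul_right hsmall.le _
    _ = ε * (ENNReal.ofReal (r ^ finrank ℝ (EuclideanSpace ℝ (Fin n))) * volume (ball (0 : EuclideanSpace ℝ (Fin n)) 1)) := by
        rw [hc, abs_of_nonneg (pow_nonneg hr.le _)]
        ring
    _ = ε * volume (closedBall x r) := by
        rw [Measure.addHaar_closedBall volume x hr.le]

theorem stmt_6 (n : ℕ) (Z : Set (EuclideanSpace ℝ (Fin n))) (hZ : IsCompact Z)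
    (f : EuclideanSpace ℝ (Fin n) → EuclideanSpace ℝ (Fin n))
    (L : NNReal) (hf : LipschitzOnWith L f Z) :
    μH[(n : ℝ)] (f '' {x ∈ Z |
      ∃ T : Submodule ℝ (EuclideanSpace ℝ (Fin n)), T ≠ ⊤ ∧
        ∀ x_j : ℕ → EuclideanSpace ℝ (Fin n),
          (∀ j, x_j j ∈ Z) → (∀ j, x_j j ≠ x) →
          Tendsto x_j atTop (nhds x) →
          ∀ v : EuclideanSpace ℝ (Fin n),
            Tendsto (fun j => (‖x_j j - x‖)⁻¹ • (f (x_j j) - f x)) atTop (nhds v) →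
            v ∈ T}) = 0 := by
  classical
  set C := {x ∈ Z |
      ∃ T : Submodule ℝ (EuclideanSpace ℝ (Fin n)), T ≠ ⊤ ∧
        ∀ x_j : ℕ → EuclideanSpace ℝ (Fin n),
          (∀ j, x_j j ∈ Z) → (∀ j, x_j j ≠ x) →
          Tendsto x_j atTop (nhds x) →
          ∀ v : EuclideanSpace ℝ (Fin n),
            Tendsto (fun j => (‖x_j j - x‖)⁻¹ • (f (x_j j) - f x)) atTop (nhds v) →
            v ∈ T} with hCdef
  have hCZ : C ⊆ Z := fun x hx => hx.1
  haveI : (μH[(n : ℝ)] : Measure (EuclideanSpace ℝ (Fin n))).IsAddHaarMeasure := by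
    have h1 : ((finrank ℝ (EuclideanSpace ℝ (Fin n)) : ℕ) : ℝ) = (n : ℝ) := by
      rw [show finrank ℝ (EuclideanSpace ℝ (Fin n)) = n from finrank_euclideanSpace_fin]
    rw [← h1]
    infer_instance
  suffices hvol : volume (f '' C) = 0 by
    exact MeasureTheory.Measure.absolutelyContinuous_isAddHaarMeasure (μH[(n : ℝ)] : Measure (EuclideanSpace ℝ (Fin n))) volume hvol
  -- it suffices to bound the volume by an arbitrary positive `η`
  refine le_antisymm ?_ zero_le
  have hMfin : volume Z + 1 ≠ ∞ :=
    ENNReal.add_ne_top.mpr ⟨hZ.measure_lt_top.ne, ENNReal.one_ne_top⟩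
  refine ENNReal.le_of_forall_pos_le_add (fun η hη _ => ?_)
  rw [zero_add]
  set ε : ℝ≥0∞ := (η : ℝ≥0∞) / (volume Z + 1) with hεdef
  have hεpos : 0 < ε := ENNReal.div_pos (by exact_mod_cast hη.ne') hMfin
  have hloc : ∀ x ∈ C, ∃ δ > 0, ∀ r : ℝ, 0 < r → r < δ →
      volume (f '' (Z ∩ Metric.closedBall x r)) ≤ ε * volume (Metric.closedBall x r) := by
    rintro x ⟨hxZ, T, hTne, hT⟩
    exact stmt_6_aux_local hf hxZ hTne hT hεpos
  choose! δ hδpos hδ using hloc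
  have hadm : ∀ x ∈ C, ∀ θ > (0 : ℝ), (Set.Ioo 0 (δ x) ∩ Set.Ioo 0 θ).Nonempty := by
    intro x hx θ hθ
    have hδx : 0 < δ x := hδpos x hx
    have hmpos : 0 < min (δ x) θ / 2 := by
      have : 0 < min (δ x) θ := lt_min hδx hθ
      linarith
    have hmlt : min (δ x) θ / 2 < min (δ x) θ := by
      have : 0 < min (δ x) θ := lt_min hδx hθ
      linarith
    exact ⟨min (δ x) θ / 2,
      ⟨hmpos, hmlt.trans_le (min_le_left _ _)⟩, ⟨hmpos, hmlt.trans_le (min_le_right _ _)⟩⟩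
  obtain ⟨t, r, htc, htC, hrF, hcover, htsum⟩ :=
    Besicovitch.exists_closedBall_covering_tsum_measure_le (volume : Measure (EuclideanSpace ℝ (Fin n))) one_ne_zero
      (fun x => Set.Ioo 0 (δ x)) C hadm
  have himg : f '' C ⊆ ⋃ z ∈ t, f '' (Z ∩ Metric.closedBall z (r z)) := by
    rintro - ⟨y, hyC, rfl⟩
    obtain ⟨z, hzt, hzB⟩ : ∃ z ∈ t, y ∈ Metric.closedBall z (r z) := by
      simpa using hcover hyC
    exact Set.mem_biUnion hzt ⟨y, ⟨hCZ hyC, hzB⟩, rfl⟩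
  calc volume (f '' C)
      ≤ ∑' z : t, volume (f '' (Z ∩ Metric.closedBall (z : EuclideanSpace ℝ (Fin n)) (r z))) :=
        (measure_mono himg).trans (measure_biUnion_le volume htc _)
    _ ≤ ∑' z : t, ε * volume (Metric.closedBall (z : EuclideanSpace ℝ (Fin n)) (r z)) := by
        refine ENNReal.tsum_le_tsum fun z => ?_
        have hz : (z : EuclideanSpace ℝ (Fin n)) ∈ C := htC z.2
        have hrz := hrF z z.2
        exact hδ z hz (r z) hrz.1 hrz.2
    _ = ε * ∑' z : t, volume (Metric.closedBall (z : EuclideanSpace ℝ (Fin n)) (r z)) := ENNReal.tsum_mul_left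
    _ ≤ ε * (volume C + 1) := by gcongr
    _ ≤ ε * (volume Z + 1) := by gcongr _ * (?_ + 1); exact measure_mono hCZ
    _ = η := by
        rw [hεdef, ENNReal.div_mul_cancel (by simp) hMfin]
end

section
/- For every σ > 0 there exists K₁ > 2 such that for all real α, β with β ≤ −σ, α ≥ σ, and α + β ≥ σ, and all K ≥ K₁, one has ((K^{α+β} − 1)³/(α+β))² < ((K^{2α} − 1)³/(2α)) · ((K^{2β} − 1)³/(2β)). -/
set_option maxHeartbeats 4000000 in
theorem stmt_14 (σ : ℝ) (hσ : 0 < σ) :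
    ∃ K₁ : ℝ, 2 < K₁ ∧
      ∀ α β : ℝ, β ≤ -σ → σ ≤ α → σ ≤ α + β →
        ∀ K : ℝ, K₁ ≤ K →
          ((K ^ (α + β) - 1) ^ 3 / (α + β)) ^ 2 <
            ((K ^ (2 * α) - 1) ^ 3 / (2 * α)) * ((K ^ (2 * β) - 1) ^ 3 / (2 * β)) := by
  have cube : ∀ x : ℝ, 0 < x → x ^ 3 < 27 * Real.exp x := by
    intro x hx
    have h1 : x / 3 + 1 ≤ Real.exp (x / 3) := by
      have := Real.add_one_le_exp (x / 3); linarith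
    have h0 : (0:ℝ) ≤ x / 3 + 1 := by linarith
    have h3 : (x / 3 + 1) ^ 3 ≤ (Real.exp (x / 3)) ^ 3 := pow_le_pow_left₀ h0 h1 3
    have h2 : Real.exp x = (Real.exp (x / 3)) ^ 3 := by
      rw [← Real.exp_nat_mul]; norm_num; ring
    nlinarith [h3, hx, sq_nonneg x]
  refine ⟨max 3 (Real.exp (4 / σ)), lt_of_lt_of_le (by norm_num) (le_max_left _ _), ?_⟩
  intro α β hβ hα hs K hK
  have hK3 : (3:ℝ) ≤ K := le_trans (le_max_left _ _) hK
  have hKe : Real.exp (4 / σ) ≤ K := le_trans (le_max_right _ _) hK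
  have hK0 : (0:ℝ) < K := by linarith
  set L := Real.log K with hLdef
  have hL : 4 / σ ≤ L := (Real.le_log_iff_exp_le hK0).mpr hKe
  have hLpos : 0 < L := lt_of_lt_of_le (by positivity) hL
  have hb : σ ≤ -β := by linarith
  have hbpos : 0 < -β := lt_of_lt_of_le hσ hb
  have hαpos : 0 < α := lt_of_lt_of_le hσ hα
  have hspos : 0 < α + β := lt_of_lt_of_le hσ hs
  have hLσ : 4 ≤ L * σ := by
    have h := mul_le_mul_of_nonneg_right hL hσ.le
    rwa [div_mul_cancel₀ _ hσ.ne'] at h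
  have hLα : 4 ≤ L * α := le_trans hLσ (by nlinarith)
  have hLb : 4 ≤ L * -β := le_trans hLσ (by nlinarith)
  have hLs : 4 ≤ L * (α + β) := le_trans hLσ (by nlinarith)
  have E : ∀ x : ℝ, K ^ x = Real.exp (L * x) := fun x => Real.rpow_def_of_pos hK0 x
  rw [E, E, E]
  set T := Real.exp (L * (α + β)) with hT
  set A := Real.exp (L * (2 * α)) with hA
  set B := Real.exp (L * (2 * β)) with hB
  have hApos : 0 < A := Real.exp_pos _
  have hBpos : 0 < B := Real.exp_pos _
  have hTpos : 0 < T := Real.exp_pos _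
  have hT1 : 1 < T := by
    have := Real.add_one_le_exp (L * (α + β)); rw [← hT] at this; linarith
  have hA2 : 2 ≤ A := by
    have := Real.add_one_le_exp (L * (2 * α)); rw [← hA] at this; nlinarith
  have hexp_pos : 0 < Real.exp (6 * (L * -β)) := Real.exp_pos _
  have hBhalf : B ≤ 1 / 2 := by
    have h2 : 2 ≤ Real.exp (L * (2 * -β)) := by
      have := Real.add_one_le_exp (L * (2 * -β)); nlinarith
    have hinv : B = (Real.exp (L * (2 * -β)))⁻¹ := by
      rw [hB, ← Real.exp_neg]; congr 1; ring
    rw [hinv]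
    have := inv_anti₀ (by norm_num : (0:ℝ) < 2) h2
    linarith [this]
  have hab : 0 < 4 * α * -β := by nlinarith
  have hT6 : T ^ 6 = A ^ 3 * B ^ 3 := by
    rw [hT, hA, hB, ← Real.exp_nat_mul, ← Real.exp_nat_mul, ← Real.exp_nat_mul, ← Real.exp_add]
    congr 1
    push_cast
    ring
  have hx : 0 < 6 * (L * -β) := by nlinarith
  have hcube := cube _ hx
  have hB3 : B ^ 3 = (Real.exp (6 * (L * -β)))⁻¹ := by
    rw [hB, ← Real.exp_nat_mul, ← Real.exp_neg]
    congr 1; push_cast; ring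
  have hB3lt : B ^ 3 < 27 / (6 * (L * -β)) ^ 3 := by
    rw [hB3, inv_eq_one_div, div_lt_div_iff₀ hexp_pos (pow_pos hx 3)]
    linarith
  -- key polynomial bound: 32 * α ≤ L^3 * (α+β)^2 * (-β)^2
  have hσσ_s : σ * σ ≤ (α + β) * (α + β) := mul_le_mul hs hs hσ.le hspos.le
  have hσσ_b : σ * σ ≤ -β * -β := mul_le_mul hb hb hσ.le hbpos.le
  have e1 : (α + β) * σ ^ 3 ≤ (α + β) ^ 2 * (-β) ^ 2 := by
    calc (α + β) * σ ^ 3 = ((α + β) * σ) * (σ * σ) := by ring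
      _ ≤ ((α + β) * (α + β)) * (-β * -β) :=
        mul_le_mul (mul_le_mul_of_nonneg_left hs hspos.le) hσσ_b (by positivity) (by positivity)
      _ = (α + β) ^ 2 * (-β) ^ 2 := by ring
  have e2 : (-β) * σ ^ 3 ≤ (α + β) ^ 2 * (-β) ^ 2 := by
    calc (-β) * σ ^ 3 = ((-β) * σ) * (σ * σ) := by ring
      _ ≤ ((-β) * -β) * ((α + β) * (α + β)) :=
        mul_le_mul (mul_le_mul_of_nonneg_left hb hbpos.le) hσσ_s (by positivity) (by positivity)
      _ = (α + β) ^ 2 * (-β) ^ 2 := by ring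
  have hkey2 : α * σ ^ 3 ≤ 2 * ((α + β) ^ 2 * (-β) ^ 2) := by
    have : α * σ ^ 3 = (α + β) * σ ^ 3 + (-β) * σ ^ 3 := by ring
    linarith [e1, e2]
  have h64 : 64 ≤ L ^ 3 * σ ^ 3 := by
    have := pow_le_pow_left₀ (by norm_num : (0:ℝ) ≤ 4) hLσ 3
    rw [mul_pow] at this
    norm_num at this
    linarith
  have hmain : 32 * α ≤ L ^ 3 * ((α + β) ^ 2 * (-β) ^ 2) := by
    have c1 : 32 * α * σ ^ 3 ≤ 64 * ((α + β) ^ 2 * (-β) ^ 2) := by linarith [hkey2]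
    have c2 : 64 * ((α + β) ^ 2 * (-β) ^ 2) ≤ (L ^ 3 * σ ^ 3) * ((α + β) ^ 2 * (-β) ^ 2) :=
      mul_le_mul_of_nonneg_right h64 (by positivity)
    have c3 : (32 * α) * σ ^ 3 ≤ (L ^ 3 * ((α + β) ^ 2 * (-β) ^ 2)) * σ ^ 3 := by
      have e : (L ^ 3 * σ ^ 3) * ((α + β) ^ 2 * (-β) ^ 2)
          = (L ^ 3 * ((α + β) ^ 2 * (-β) ^ 2)) * σ ^ 3 := by ring
      rw [e] at c2
      linarith
    exact le_of_mul_le_mul_right c3 (by positivity)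
  have hstep2 : B ^ 3 * (4 * α * -β) < (α + β) ^ 2 / 64 := by
    have h1 : B ^ 3 * (4 * α * -β) < 27 / (6 * (L * -β)) ^ 3 * (4 * α * -β) :=
      mul_lt_mul_of_pos_right hB3lt hab
    have h2 : 27 / (6 * (L * -β)) ^ 3 * (4 * α * -β) ≤ (α + β) ^ 2 / 64 := by
      rw [div_mul_eq_mul_div, div_le_div_iff₀ (pow_pos hx 3) (by norm_num : (0:ℝ) < 64)]
      have hmb := mul_le_mul_of_nonneg_left hmain hbpos.le
      have e : -β * (L ^ 3 * ((α + β) ^ 2 * (-β) ^ 2)) * 216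
          = (α + β) ^ 2 * (6 * (L * -β)) ^ 3 := by ring
      have e2 : 27 * (4 * α * -β) * 64 = (-β * (32 * α)) * 216 := by ring
      rw [e2, ← e]
      linarith
    linarith
  have hKEY : (T - 1) ^ 6 * (4 * α * -β) < (A - 1) ^ 3 * (1 - B) ^ 3 * (α + β) ^ 2 := by
    have s1 : (T - 1) ^ 6 * (4 * α * -β) < T ^ 6 * (4 * α * -β) := by
      have h : (T - 1) ^ 6 < T ^ 6 := by
        apply pow_lt_pow_left₀ (by linarith) (by linarith)
        norm_num
      exact mul_lt_mul_of_pos_right h hab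
    have s2 : T ^ 6 * (4 * α * -β) = A ^ 3 * (B ^ 3 * (4 * α * -β)) := by
      rw [hT6]; ring
    have s3 : A ^ 3 * (B ^ 3 * (4 * α * -β)) < A ^ 3 * ((α + β) ^ 2 / 64) :=
      mul_lt_mul_of_pos_left hstep2 (by positivity)
    have h1 : A ^ 3 / 8 ≤ (A - 1) ^ 3 := by nlinarith [hA2, sq_nonneg (A - 2)]
    have h2 : (1:ℝ) / 8 ≤ (1 - B) ^ 3 := by
      have hh : (1/2:ℝ) ≤ 1 - B := by linarith
      calc (1:ℝ)/8 = (1/2:ℝ)^3 := by norm_num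
        _ ≤ (1 - B)^3 := pow_le_pow_left₀ (by norm_num) hh 3
    have hprod : A ^ 3 / 8 * (1 / 8) ≤ (A - 1) ^ 3 * (1 - B) ^ 3 := by
      apply mul_le_mul h1 h2 (by norm_num)
      exact pow_nonneg (by linarith) 3
    have s4 : A ^ 3 * ((α + β) ^ 2 / 64) ≤ (A - 1) ^ 3 * (1 - B) ^ 3 * (α + β) ^ 2 := by
      have h := mul_le_mul_of_nonneg_right hprod (sq_nonneg (α + β))
      have e : A ^ 3 / 8 * (1 / 8) * (α + β) ^ 2 = A ^ 3 * ((α + β) ^ 2 / 64) := by ring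
      rw [e] at h
      linarith
    rw [s2] at s1
    linarith
  have hre : ((A - 1) ^ 3 / (2 * α)) * ((B - 1) ^ 3 / (2 * β)) =
      ((A - 1) ^ 3 * (1 - B) ^ 3) / (4 * α * -β) := by
    rw [div_mul_div_comm]
    rw [div_eq_div_iff (show (2*α)*(2*β) ≠ 0 from (show (2*α)*(2*β) < 0 by nlinarith).ne) hab.ne']
    ring
  rw [hre, div_pow, ← pow_mul]
  norm_num
  rw [div_lt_div_iff₀ (by positivity) (show (0:ℝ) < -(4 * α * β) by nlinarith)]
  linarith [hKEY]
end
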